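/- For real numbers w_x, w_y and κ = 42², the 6×6 matrix L with rows (-6, 0, 0, -6w_x/7, -2w_y/7, 0), (0, -6, 0, -2w_x/7, -6w_y/7, 0), (0, 0, -6, 8w_x/7, 8w_y/7, 0), (w_x, 2w_x/7, 0, -6, 0, 5w_y/7), (2w_y/7, w_y, 0, 0, -6, 5w_x/7), (0, 0, 0, -2w_y/7, -2w_x/7, -6) has all complex eigenvalues with real part equal to -6. -/

import Mathlib

open Matrix

/-- The 6×6 matrix `L` from the quasidynamic approximation. -/
noncomputable def Lmat (wx wy : ℝ) : Matrix (Fin 6) (Fin 6) ℝ :=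
  !![-6, 0, 0, -6 * wx / 7, -2 * wy / 7, 0;
     0, -6, 0, -2 * wx / 7, -6 * wy / 7, 0;
     0, 0, -6, 8 * wx / 7, 8 * wy / 7, 0;
     wx, 2 * wx / 7, 0, -6, 0, 5 * wy / 7;
     2 * wy / 7, wy, 0, 0, -6, 5 * wx / 7;
     0, 0, 0, -2 * wy / 7, -2 * wx / 7, -6]

/-- Evaluating the characteristic polynomial of a matrix gives an explicit determinant. -/
private lemma eval_charpoly {R : Type*} [CommRing R] {n : ℕ}
    (A : Matrix (Fin n) (Fin n) R) (μ : R) :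
    Polynomial.eval μ A.charpoly
      = (Matrix.of (fun i j => (if i = j then μ else 0) - A i j)).det := by
  unfold Matrix.charpoly
  rw [← Polynomial.coe_evalRingHom, RingHom.map_det, RingHom.mapMatrix_apply]
  congr 1
  ext i j
  by_cases h : i = j
  · subst h
    simp [charmatrix_apply_eq]
  · simp [charmatrix_apply_ne _ _ _ h, h]

private lemma cons_val_five {α : Type*} {m : ℕ} (x : α)
    (u : Fin m.succ.succ.succ.succ.succ → α) :
    Matrix.vecCons x u 5 = Matrix.vecHead (Matrix.vecTail (Matrix.vecTail
      (Matrix.vecTail (Matrix.vecTail u)))) :=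
  rfl

set_option maxRecDepth 8000 in
set_option maxHeartbeats 2000000 in
private lemma det_aux (wx wy : ℝ) (μ : ℂ) :
    (!![μ+6, 0, 0, 6*(wx:ℂ)/7, 2*(wy:ℂ)/7, 0;
     0, μ+6, 0, 2*(wx:ℂ)/7, 6*(wy:ℂ)/7, 0;
     0, 0, μ+6, -8*(wx:ℂ)/7, -8*(wy:ℂ)/7, 0;
     -(wx:ℂ), -2*(wx:ℂ)/7, 0, μ+6, 0, -5*(wy:ℂ)/7;
     -2*(wy:ℂ)/7, -(wy:ℂ), 0, 0, μ+6, -5*(wx:ℂ)/7;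
     0, 0, 0, 2*(wy:ℂ)/7, 2*(wx:ℂ)/7, μ+6] : Matrix (Fin 6) (Fin 6) ℂ).det
    = (μ+6)^2 * ((μ+6)^2 + 46*((wx:ℂ)^2+(wy:ℂ)^2)/49) * ((μ+6)^2 + 10*((wx:ℂ)^2+(wy:ℂ)^2)/49) := by
  simp [Matrix.det_succ_row_zero, Fin.sum_univ_succ, Fin.succAbove]
  norm_num [Fin.castSucc, Fin.castAdd, Fin.castLE, Fin.succ, Matrix.cons_val_succ',
    Matrix.cons_val_zero, Matrix.cons_val_one, Matrix.head_cons, Matrix.vecHead, Matrix.vecTail]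
  ring

private lemma sq_eq_neg_re_zero (z : ℂ) (c : ℝ) (hc : 0 ≤ c) (h : z ^ 2 = -(c : ℂ)) :
    z.re = 0 := by
  have h1 := congrArg Complex.re h
  have h2 := congrArg Complex.im h
  simp [pow_two, Complex.mul_re, Complex.mul_im] at h1 h2
  have h3 : z.re * z.im = 0 := by linarith
  have h4 : z.re ^ 4 ≤ 0 := by nlinarith [sq_nonneg z.re, mul_nonneg hc (sq_nonneg z.re)]
  have h5 : z.re ^ 4 = 0 := le_antisymm h4 (by positivity)
  exact pow_eq_zero_iff (by norm_num) |>.mp h5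

set_option maxRecDepth 8000 in
set_option maxHeartbeats 2000000 in
/-- All complex eigenvalues of `L` have real part `-6`. -/
theorem Lmat_eigenvalues_re (wx wy : ℝ) (μ : ℂ)
    (hμ : ((Lmat wx wy).map (Complex.ofReal)).charpoly.IsRoot μ) :
    μ.re = -6 := by
  rw [Polynomial.IsRoot.def, _root_.eval_charpoly] at hμ
  have hNeq : (Matrix.of (fun i j => (if i = j then μ else 0)
        - ((Lmat wx wy).map (Complex.ofReal)) i j)) =
      !![μ+6, 0, 0, 6*(wx:ℂ)/7, 2*(wy:ℂ)/7, 0;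
        0, μ+6, 0, 2*(wx:ℂ)/7, 6*(wy:ℂ)/7, 0;
        0, 0, μ+6, -8*(wx:ℂ)/7, -8*(wy:ℂ)/7, 0;
        -(wx:ℂ), -2*(wx:ℂ)/7, 0, μ+6, 0, -5*(wy:ℂ)/7;
        -2*(wy:ℂ)/7, -(wy:ℂ), 0, 0, μ+6, -5*(wx:ℂ)/7;
        0, 0, 0, 2*(wy:ℂ)/7, 2*(wx:ℂ)/7, μ+6] := by
    ext i j
    fin_cases i <;> fin_cases j <;>
      simp [Lmat, Matrix.map_apply, cons_val_five, Matrix.vecHead, Matrix.vecTail] <;>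
      push_cast <;> ring
  rw [hNeq, det_aux] at hμ
  -- factor analysis
  rcases mul_eq_zero.mp hμ with h | h
  · rcases mul_eq_zero.mp h with h | h
    · have hz : μ + 6 = 0 := pow_eq_zero_iff (n := 2) (by norm_num) |>.mp h
      have h6 : μ.re + 6 = 0 := by simpa using congrArg Complex.re hz
      linarith
    · have hz : (μ + 6) ^ 2 = -(((46 * (wx ^ 2 + wy ^ 2) / 49 : ℝ)) : ℂ) := by
        push_cast
        linear_combination h
      have h0 := sq_eq_neg_re_zero (μ + 6) _ (by positivity) hz
      have hre : (μ + 6).re = μ.re + 6 := by simp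
      rw [hre] at h0
      linarith
  · have hz : (μ + 6) ^ 2 = -(((10 * (wx ^ 2 + wy ^ 2) / 49 : ℝ)) : ℂ) := by
      push_cast
      linear_combination h
    have h0 := sq_eq_neg_re_zero (μ + 6) _ (by positivity) hz
    have hre : (μ + 6).re = μ.re + 6 := by simp
    rw [hre] at h0
    linarith
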